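/- Let a finite discounted MDP be given with state space S, action space A, transition kernel T, reward function r : S × A → [0,1], initial distribution d₀, and discount factor γ ∈ (0,1). Let π^E be a deterministic expert policy and let d^{π^E}(s̃) = (1−γ) Σ_{t=0}^∞ γ^t Pr(s_t = s̃ | π^E) be its normalized discounted visitation distribution over S. Let N ≥ 1 and let the dataset D = (s̃₁, …, s̃_N) consist of N independent draws from d^{π^E}. Suppose for every dataset D a deterministic policy π_D is given satisfying π_D(s̃) = π^E(s̃) for all states s̃ appearing in D. Then for every state s with d₀(s) > 0, the expected value gap satisfies E_D[ V^{π^E}(s) − V^{π_D}(s) ] ≤ (1/(d₀(s)(1−γ)²)) · (4|S|/(9N)). -/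

import Mathlib

open scoped BigOperators

/-- The row-stochastic matrix induced by a deterministic policy `π` on a transition
kernel `T`: `(P_π)_{s,s'} = T(s'|s,π(s))`. -/
noncomputable def polMatrix {S A : Type*} [Fintype S]
    (T : S → A → S → ℝ) (π : S → A) : Matrix S S ℝ :=
  fun s s' => T s (π s) s'

/-- The value function of a deterministic policy `π`:
`V^π(s) = Σ_{t=0}^∞ γ^t Σ_{s'} (P_π^t)_{s,s'} r(s',π(s'))`. -/
noncomputable def valueFn {S A : Type*} [Fintype S] [DecidableEq S]
    (T : S → A → S → ℝ) (r : S → A → ℝ) (γ : ℝ) (π : S → A) (s : S) : ℝ :=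
  ∑' t : ℕ, γ ^ t * ∑ s', (polMatrix T π ^ t) s s' * r s' (π s')

/-- The normalized discounted visitation distribution of policy `π` started from the
initial distribution `d₀`: `d^π(st) = (1−γ) Σ_{t=0}^∞ γ^t Σ_{s₀} d₀(s₀) (P_π^t)_{s₀,st}`. -/
noncomputable def dvisit {S A : Type*} [Fintype S] [DecidableEq S]
    (T : S → A → S → ℝ) (d0 : S → ℝ) (γ : ℝ) (π : S → A) (st : S) : ℝ :=
  (1 - γ) * ∑' t : ℕ, γ ^ t * ∑ s₀, d0 s₀ * (polMatrix T π ^ t) s₀ st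



section Aux
variable {S A : Type*} [Fintype S] [DecidableEq S]
variable {T : S → A → S → ℝ}

lemma polPow_nonneg (hT0 : ∀ s a s', 0 ≤ T s a s') (π : S → A) :
    ∀ (t : ℕ) (s s' : S), 0 ≤ (polMatrix T π ^ t) s s' := by
  intro t
  induction t with
  | zero => intro s s'; by_cases h : s = s' <;> simp [Matrix.one_apply, h]
  | succ t ih =>
      intro s s'
      rw [pow_succ, Matrix.mul_apply]
      exact Finset.sum_nonneg fun k _ => mul_nonneg (ih s k) (hT0 k (π k) s')

lemma polPow_rowsum (hT1 : ∀ s a, ∑ s', T s a s' = 1) (π : S → A) :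
    ∀ (t : ℕ) (s : S), ∑ s', (polMatrix T π ^ t) s s' = 1 := by
  intro t
  induction t with
  | zero => intro s; simp [Matrix.one_apply]
  | succ t ih =>
      intro s
      simp only [pow_succ, Matrix.mul_apply]
      rw [Finset.sum_comm]
      have : ∀ k, ∑ s', (polMatrix T π ^ t) s k * polMatrix T π k s'
          = (polMatrix T π ^ t) s k := by
        intro k
        rw [← Finset.mul_sum]
        simp [polMatrix, hT1 k (π k)]
      simp only [this]
      exact ih s

lemma polPow_le_one (hT0 : ∀ s a s', 0 ≤ T s a s')
    (hT1 : ∀ s a, ∑ s', T s a s' = 1) (π : S → A) (t : ℕ) (s s' : S) :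
    (polMatrix T π ^ t) s s' ≤ 1 := by
  calc (polMatrix T π ^ t) s s' ≤ ∑ k, (polMatrix T π ^ t) s k :=
        Finset.single_le_sum (fun k _ => polPow_nonneg hT0 π t s k) (Finset.mem_univ s')
  _ = 1 := polPow_rowsum hT1 π t s

lemma polPow_apply_abs_le (hT0 : ∀ s a s', 0 ≤ T s a s')
    (hT1 : ∀ s a, ∑ s', T s a s' = 1) (π : S → A) {c : S → ℝ} {M : ℝ}
    (hc : ∀ s', |c s'| ≤ M) (t : ℕ) (s : S) :
    |∑ s', (polMatrix T π ^ t) s s' * c s'| ≤ M := by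
  calc |∑ s', (polMatrix T π ^ t) s s' * c s'|
      ≤ ∑ s', |(polMatrix T π ^ t) s s' * c s'| := Finset.abs_sum_le_sum_abs _ _
  _ ≤ ∑ s', (polMatrix T π ^ t) s s' * M := by
        refine Finset.sum_le_sum fun s' _ => ?_
        rw [abs_mul, abs_of_nonneg (polPow_nonneg hT0 π t s s')]
        exact mul_le_mul_of_nonneg_left (hc s') (polPow_nonneg hT0 π t s s')
  _ = M := by rw [← Finset.sum_mul, polPow_rowsum hT1 π t s, one_mul]

end Aux

noncomputable def pser {S A : Type*} [Fintype S] [DecidableEq S] (T : S → A → S → ℝ) (γ : ℝ)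
    (π : S → A) (c : S → ℝ) (s : S) : ℝ :=
  ∑' t : ℕ, γ ^ t * ∑ s', (polMatrix T π ^ t) s s' * c s'

section Pser
variable {S A : Type*} [Fintype S] [DecidableEq S]
variable {T : S → A → S → ℝ} {γ : ℝ}

lemma pser_summable (hT0 : ∀ s a s', 0 ≤ T s a s')
    (hT1 : ∀ s a, ∑ s', T s a s' = 1) (hγ0 : 0 ≤ γ) (hγ1 : γ < 1)
    (π : S → A) {c : S → ℝ} {M : ℝ} (hc : ∀ s', |c s'| ≤ M) (s : S) :
    Summable (fun t : ℕ => γ ^ t * ∑ s', (polMatrix T π ^ t) s s' * c s') := by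
  have hgeo : Summable (fun t : ℕ => γ ^ t * M) :=
    (summable_geometric_of_lt_one hγ0 hγ1).mul_right M
  have hle : ∀ t : ℕ, |γ ^ t * ∑ s', (polMatrix T π ^ t) s s' * c s'| ≤ γ ^ t * M := by
    intro t
    rw [abs_mul, abs_pow, abs_of_nonneg hγ0]
    exact mul_le_mul_of_nonneg_left (polPow_apply_abs_le hT0 hT1 π hc t s)
      (pow_nonneg hγ0 t)
  exact Summable.of_abs (Summable.of_nonneg_of_le (fun t => abs_nonneg _) hle hgeo)

lemma pser_bellman (hT0 : ∀ s a s', 0 ≤ T s a s')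
    (hT1 : ∀ s a, ∑ s', T s a s' = 1) (hγ0 : 0 ≤ γ) (hγ1 : γ < 1)
    (π : S → A) {c : S → ℝ} {M : ℝ} (hc : ∀ s', |c s'| ≤ M) (s : S) :
    pser T γ π c s = c s + γ * ∑ k, polMatrix T π s k * pser T γ π c k := by
  have hsum := pser_summable hT0 hT1 hγ0 hγ1 π hc s
  simp only [pser]
  rw [Summable.tsum_eq_zero_add hsum]
  congr 1
  · simp [Matrix.one_apply]
  have key : ∀ t : ℕ, γ ^ (t + 1) * ∑ s', (polMatrix T π ^ (t + 1)) s s' * c s'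
      = ∑ k, polMatrix T π s k * (γ * (γ ^ t * ∑ s', (polMatrix T π ^ t) k s' * c s')) := by
    intro t
    have h1 : ∑ s', (polMatrix T π ^ (t + 1)) s s' * c s'
        = ∑ k, polMatrix T π s k * ∑ s', (polMatrix T π ^ t) k s' * c s' := by
      simp only [pow_succ', Matrix.mul_apply, Finset.sum_mul]
      rw [Finset.sum_comm]
      simp [Finset.mul_sum, mul_assoc]
    rw [h1, pow_succ, Finset.mul_sum]
    congr 1; funext k; ring
  simp only [key]
  rw [Summable.tsum_finsetSum (fun k _ => ?_)]
  · rw [Finset.mul_sum]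
    congr 1; funext k
    rw [tsum_mul_left, tsum_mul_left]
    ring
  · exact (((pser_summable hT0 hT1 hγ0 hγ1 π hc k).mul_left γ).mul_left
      (polMatrix T π s k))

lemma pser_nonneg (hT0 : ∀ s a s', 0 ≤ T s a s') (hγ0 : 0 ≤ γ)
    (π : S → A) {c : S → ℝ} (hc : ∀ s', 0 ≤ c s') (s : S) :
    0 ≤ pser T γ π c s := by
  refine tsum_nonneg fun t => mul_nonneg (pow_nonneg hγ0 t) ?_
  exact Finset.sum_nonneg fun s' _ => mul_nonneg (polPow_nonneg hT0 π t s s') (hc s')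

lemma pser_le (hT0 : ∀ s a s', 0 ≤ T s a s')
    (hT1 : ∀ s a, ∑ s', T s a s' = 1) (hγ0 : 0 ≤ γ) (hγ1 : γ < 1)
    (π : S → A) {c : S → ℝ} {M : ℝ} (hc : ∀ s', |c s'| ≤ M) (s : S) :
    pser T γ π c s ≤ M * (1 - γ)⁻¹ := by
  have h := Summable.tsum_le_tsum (f := fun t : ℕ => γ ^ t * ∑ s', (polMatrix T π ^ t) s s' * c s')
    (g := fun t : ℕ => γ ^ t * M) (fun t => by
      exact mul_le_mul_of_nonneg_left
        (le_trans (le_abs_self _) (polPow_apply_abs_le hT0 hT1 π hc t s))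
        (pow_nonneg hγ0 t))
    (pser_summable hT0 hT1 hγ0 hγ1 π hc s)
    ((summable_geometric_of_lt_one hγ0 hγ1).mul_right M)
  calc pser T γ π c s ≤ ∑' t : ℕ, γ ^ t * M := by simpa [pser] using h
  _ = M * (1 - γ)⁻¹ := by
      rw [tsum_mul_right, tsum_geometric_of_lt_one hγ0 hγ1, mul_comm]

end Pser

section Rep
variable {S A : Type*} [Fintype S] [DecidableEq S]
variable {T : S → A → S → ℝ} {γ : ℝ}

lemma pser_mono (hT0 : ∀ s a s', 0 ≤ T s a s')
    (hT1 : ∀ s a, ∑ s', T s a s' = 1) (hγ0 : 0 ≤ γ) (hγ1 : γ < 1)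
    (π : S → A) {c h : S → ℝ} {M M' : ℝ}
    (hc : ∀ s', |c s'| ≤ M) (hh : ∀ s', |h s'| ≤ M')
    (hch : ∀ s', c s' ≤ h s') (s : S) :
    pser T γ π c s ≤ pser T γ π h s := by
  refine Summable.tsum_le_tsum (fun t => ?_) (pser_summable hT0 hT1 hγ0 hγ1 π hc s)
    (pser_summable hT0 hT1 hγ0 hγ1 π hh s)
  refine mul_le_mul_of_nonneg_left (Finset.sum_le_sum fun s' _ => ?_) (pow_nonneg hγ0 t)
  exact mul_le_mul_of_nonneg_left (hch s') (polPow_nonneg hT0 π t s s')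

lemma perf_diff (hT0 : ∀ s a s', 0 ≤ T s a s')
    (hT1 : ∀ s a, ∑ s', T s a s' = 1) (hγ0 : 0 ≤ γ) (hγ1 : γ < 1)
    (r : S → A → ℝ) (hr0 : ∀ s a, 0 ≤ r s a) (hr1 : ∀ s a, r s a ≤ 1)
    (πE π : S → A) (s : S) :
    pser T γ πE (fun s' => r s' (πE s')) s - pser T γ π (fun s' => r s' (π s')) s
      = pser T γ πE (fun s' => r s' (πE s')
          + γ * ∑ k, polMatrix T πE s' k * pser T γ π (fun u => r u (π u)) k
          - pser T γ π (fun u => r u (π u)) s') s := by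
  have hγ1' : 0 < 1 - γ := by linarith
  set P : Matrix S S ℝ := polMatrix T πE with hP
  set V : S → ℝ := fun k => pser T γ π (fun u => r u (π u)) k with hV
  set VE : S → ℝ := fun k => pser T γ πE (fun u => r u (πE u)) k with hVE
  set g : S → ℝ := fun s' => r s' (πE s') + γ * ∑ k, P s' k * V k - V s' with hg
  have hrE : ∀ (ρ : S → A) (s' : S), |r s' (ρ s')| ≤ 1 := fun ρ s' =>
    abs_le.mpr ⟨by linarith [hr0 s' (ρ s')], hr1 s' (ρ s')⟩
  have hVb : ∀ (ρ : S → A) (k : S), |pser T γ ρ (fun u => r u (ρ u)) k| ≤ (1 - γ)⁻¹ := by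
    intro ρ k
    refine abs_le.mpr ⟨?_, ?_⟩
    · have := pser_nonneg (γ := γ) hT0 hγ0 ρ (c := fun u => r u (ρ u))
        (fun u => hr0 u (ρ u)) k
      have hpos : (0:ℝ) ≤ (1 - γ)⁻¹ := le_of_lt (inv_pos.mpr hγ1')
      linarith
    · simpa using pser_le hT0 hT1 hγ0 hγ1 ρ (hrE ρ) k
  have hgb : ∀ s', |g s'| ≤ 1 + γ * (1 - γ)⁻¹ + (1 - γ)⁻¹ := by
    intro s'
    have h1 : |γ * ∑ k, P s' k * V k| ≤ γ * (1 - γ)⁻¹ := by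
      rw [abs_mul, abs_of_nonneg hγ0]
      refine mul_le_mul_of_nonneg_left ?_ hγ0
      have := polPow_apply_abs_le hT0 hT1 πE (c := V) (fun k => hVb π k) 1 s'
      simpa [pow_one] using this
    calc |g s'| ≤ |r s' (πE s') + γ * ∑ k, P s' k * V k| + |V s'| := abs_sub _ _
    _ ≤ (|r s' (πE s')| + |γ * ∑ k, P s' k * V k|) + |V s'| := by
        gcongr; exact abs_add_le _ _
    _ ≤ 1 + γ * (1 - γ)⁻¹ + (1 - γ)⁻¹ := by
        have := hrE πE s'
        have := hVb π s'
        linarith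
  set Δ : S → ℝ := fun k => VE k - V k with hΔ
  have hΔb : ∀ k, |Δ k| ≤ 2 * (1 - γ)⁻¹ := by
    intro k
    calc |Δ k| ≤ |VE k| + |V k| := abs_sub _ _
    _ ≤ 2 * (1 - γ)⁻¹ := by
        have := hVb πE k; have := hVb π k; linarith
  have hrec : ∀ s', Δ s' = g s' + γ * ∑ k, P s' k * Δ k := by
    intro s'
    have hBE := pser_bellman hT0 hT1 hγ0 hγ1 πE (hrE πE) s'
    have hsplit : ∑ k, P s' k * Δ k = ∑ k, P s' k * VE k - ∑ k, P s' k * V k := by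
      rw [← Finset.sum_sub_distrib]
      exact Finset.sum_congr rfl fun k _ => by simp [hΔ]; ring
    simp only [hΔ, hg]
    rw [hsplit]
    have : VE s' = r s' (πE s') + γ * ∑ k, P s' k * VE k := hBE
    rw [this]; ring
  have hstep : ∀ n : ℕ, Δ s = (∑ t ∈ Finset.range n, γ ^ t * ∑ s', (P ^ t) s s' * g s')
      + γ ^ n * ∑ s', (P ^ n) s s' * Δ s' := by
    intro n
    induction n with
    | zero => simp [Matrix.one_apply]
    | succ n ih =>
        rw [ih, Finset.sum_range_succ]
        have hrw : ∑ s', (P ^ n) s s' * Δ s'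
            = ∑ s', (P ^ n) s s' * g s' + γ * ∑ k, (P ^ (n+1)) s k * Δ k := by
          calc ∑ s', (P ^ n) s s' * Δ s'
              = ∑ s', ((P ^ n) s s' * g s' + γ * ∑ k, (P ^ n) s s' * (P s' k * Δ k)) := by
                refine Finset.sum_congr rfl fun s' _ => ?_
                rw [hrec s', mul_add]
                congr 1
                rw [← Finset.mul_sum]
                ring
          _ = ∑ s', (P ^ n) s s' * g s' + γ * ∑ s', ∑ k, (P ^ n) s s' * (P s' k * Δ k) := by
                rw [Finset.sum_add_distrib, ← Finset.mul_sum]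
          _ = ∑ s', (P ^ n) s s' * g s' + γ * ∑ k, (P ^ (n+1)) s k * Δ k := by
                have hcomm : ∑ s', ∑ k, (P ^ n) s s' * (P s' k * Δ k)
                    = ∑ k, (P ^ (n+1)) s k * Δ k := by
                  rw [Finset.sum_comm]
                  refine Finset.sum_congr rfl fun k _ => ?_
                  simp only [pow_succ, Matrix.mul_apply, Finset.sum_mul]
                  exact Finset.sum_congr rfl fun s' _ => by ring
                rw [hcomm]
        rw [hrw]
        rw [pow_succ]
        ring
  have hsumg := pser_summable hT0 hT1 hγ0 hγ1 πE hgb s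
  have h1 : Filter.Tendsto (fun n => ∑ t ∈ Finset.range n, γ ^ t * ∑ s', (P ^ t) s s' * g s')
      Filter.atTop (nhds (pser T γ πE g s)) := hsumg.hasSum.tendsto_sum_nat
  have h2 : Filter.Tendsto (fun n : ℕ => γ ^ n * ∑ s', (P ^ n) s s' * Δ s')
      Filter.atTop (nhds 0) := by
    refine squeeze_zero_norm (a := fun n : ℕ => γ ^ n * (2 * (1 - γ)⁻¹)) (fun n => ?_) ?_
    · rw [Real.norm_eq_abs, abs_mul, abs_pow, abs_of_nonneg hγ0]
      exact mul_le_mul_of_nonneg_left (polPow_apply_abs_le hT0 hT1 πE hΔb n s)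
        (pow_nonneg hγ0 n)
    · simpa using (tendsto_pow_atTop_nhds_zero_of_lt_one hγ0 hγ1).mul_const (2 * (1 - γ)⁻¹)
  have h3 : Filter.Tendsto (fun n : ℕ =>
      (∑ t ∈ Finset.range n, γ ^ t * ∑ s', (P ^ t) s s' * g s')
        + γ ^ n * ∑ s', (P ^ n) s s' * Δ s')
      Filter.atTop (nhds (pser T γ πE g s + 0)) := h1.add h2
  have h4 : Filter.Tendsto (fun _ : ℕ => Δ s) Filter.atTop (nhds (Δ s)) :=
    tendsto_const_nhds
  have h5 : Δ s = pser T γ πE g s + 0 := by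
    refine tendsto_nhds_unique ?_ h3
    simpa only [← hstep] using h4
  have : Δ s = pser T γ πE g s := by rw [h5, add_zero]
  exact this
end Rep


noncomputable def wser {S A : Type*} [Fintype S] [DecidableEq S]
    (T : S → A → S → ℝ) (γ : ℝ) (π : S → A) (s st : S) : ℝ :=
  ∑' t : ℕ, γ ^ t * (polMatrix T π ^ t) s st

section Dv
variable {S A : Type*} [Fintype S] [DecidableEq S]
variable {T : S → A → S → ℝ} {γ : ℝ} {d0 : S → ℝ}

lemma wser_summable (hT0 : ∀ s a s', 0 ≤ T s a s')
    (hT1 : ∀ s a, ∑ s', T s a s' = 1) (hγ0 : 0 ≤ γ) (hγ1 : γ < 1)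
    (π : S → A) (s st : S) :
    Summable (fun t : ℕ => γ ^ t * (polMatrix T π ^ t) s st) := by
  refine Summable.of_nonneg_of_le
    (fun t => mul_nonneg (pow_nonneg hγ0 t) (polPow_nonneg hT0 π t s st))
    (fun t => ?_) (summable_geometric_of_lt_one hγ0 hγ1)
  calc γ ^ t * (polMatrix T π ^ t) s st ≤ γ ^ t * 1 :=
        mul_le_mul_of_nonneg_left (polPow_le_one hT0 hT1 π t s st) (pow_nonneg hγ0 t)
  _ = γ ^ t := mul_one _

lemma pser_eq_sum_wser (hT0 : ∀ s a s', 0 ≤ T s a s')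
    (hT1 : ∀ s a, ∑ s', T s a s' = 1) (hγ0 : 0 ≤ γ) (hγ1 : γ < 1)
    (π : S → A) (c : S → ℝ) (s : S) :
    pser T γ π c s = ∑ s', c s' * wser T γ π s s' := by
  simp only [pser, wser]
  have key : ∀ t : ℕ, γ ^ t * ∑ s', (polMatrix T π ^ t) s s' * c s'
      = ∑ s', (γ ^ t * (polMatrix T π ^ t) s s') * c s' := by
    intro t
    rw [Finset.mul_sum]
    exact Finset.sum_congr rfl fun s' _ => by ring
  simp only [key]
  rw [Summable.tsum_finsetSum (fun s' _ => (wser_summable hT0 hT1 hγ0 hγ1 π s s').mul_right (c s'))]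
  exact Finset.sum_congr rfl fun s' _ => by rw [tsum_mul_right]; ring

lemma dvisit_summand_summable (hT0 : ∀ s a s', 0 ≤ T s a s')
    (hT1 : ∀ s a, ∑ s', T s a s' = 1)
    (hd00 : ∀ s, 0 ≤ d0 s) (hd01 : ∑ s, d0 s = 1) (hγ0 : 0 ≤ γ) (hγ1 : γ < 1)
    (π : S → A) (st : S) :
    Summable (fun t : ℕ => γ ^ t * ∑ s₀, d0 s₀ * (polMatrix T π ^ t) s₀ st) := by
  refine Summable.of_nonneg_of_le
    (fun t => mul_nonneg (pow_nonneg hγ0 t) (Finset.sum_nonneg fun s₀ _ =>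
      mul_nonneg (hd00 s₀) (polPow_nonneg hT0 π t s₀ st)))
    (fun t => ?_) (summable_geometric_of_lt_one hγ0 hγ1)
  have : ∑ s₀, d0 s₀ * (polMatrix T π ^ t) s₀ st ≤ ∑ s₀, d0 s₀ * 1 := by
    refine Finset.sum_le_sum fun s₀ _ => ?_
    exact mul_le_mul_of_nonneg_left (polPow_le_one hT0 hT1 π t s₀ st) (hd00 s₀)
  simp only [mul_one] at this
  rw [hd01] at this
  calc γ ^ t * ∑ s₀, d0 s₀ * (polMatrix T π ^ t) s₀ st ≤ γ ^ t * 1 :=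
        mul_le_mul_of_nonneg_left this (pow_nonneg hγ0 t)
  _ = γ ^ t := mul_one _

lemma dvisit_nonneg (hT0 : ∀ s a s', 0 ≤ T s a s')
    (hd00 : ∀ s, 0 ≤ d0 s) (hγ0 : 0 ≤ γ) (hγ1 : γ < 1) (π : S → A) (st : S) :
    0 ≤ dvisit T d0 γ π st := by
  refine mul_nonneg (by linarith) (tsum_nonneg fun t => ?_)
  exact mul_nonneg (pow_nonneg hγ0 t) (Finset.sum_nonneg fun s₀ _ =>
    mul_nonneg (hd00 s₀) (polPow_nonneg hT0 π t s₀ st))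

lemma dvisit_sum_one (hT0 : ∀ s a s', 0 ≤ T s a s')
    (hT1 : ∀ s a, ∑ s', T s a s' = 1)
    (hd00 : ∀ s, 0 ≤ d0 s) (hd01 : ∑ s, d0 s = 1) (hγ0 : 0 ≤ γ) (hγ1 : γ < 1)
    (π : S → A) :
    ∑ st, dvisit T d0 γ π st = 1 := by
  simp only [dvisit]
  rw [← Finset.mul_sum]
  rw [← Summable.tsum_finsetSum (fun st _ => dvisit_summand_summable hT0 hT1 hd00 hd01 hγ0 hγ1 π st)]
  have key : ∀ t : ℕ, ∑ st, γ ^ t * ∑ s₀, d0 s₀ * (polMatrix T π ^ t) s₀ st = γ ^ t := by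
    intro t
    rw [← Finset.mul_sum, Finset.sum_comm]
    have : ∀ s₀, ∑ st, d0 s₀ * (polMatrix T π ^ t) s₀ st = d0 s₀ := by
      intro s₀
      rw [← Finset.mul_sum, polPow_rowsum hT1 π t s₀, mul_one]
    simp only [this, hd01, mul_one]
  simp only [key]
  rw [tsum_geometric_of_lt_one hγ0 hγ1]
  rw [mul_inv_cancel₀ (by linarith : (1:ℝ) - γ ≠ 0)]

lemma wser_le_dvisit (hT0 : ∀ s a s', 0 ≤ T s a s')
    (hT1 : ∀ s a, ∑ s', T s a s' = 1)
    (hd00 : ∀ s, 0 ≤ d0 s) (hd01 : ∑ s, d0 s = 1) (hγ0 : 0 ≤ γ) (hγ1 : γ < 1)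
    (π : S → A) {s : S} (hs : 0 < d0 s) (st : S) :
    wser T γ π s st ≤ dvisit T d0 γ π st / ((1 - γ) * d0 s) := by
  have hγ1' : 0 < 1 - γ := by linarith
  rw [le_div_iff₀ (by positivity)]
  have h1 : ∀ t : ℕ, (γ ^ t * (polMatrix T π ^ t) s st) * (d0 s)
      ≤ γ ^ t * ∑ s₀, d0 s₀ * (polMatrix T π ^ t) s₀ st := by
    intro t
    have : d0 s * (polMatrix T π ^ t) s st ≤ ∑ s₀, d0 s₀ * (polMatrix T π ^ t) s₀ st :=
      Finset.single_le_sum (f := fun s₀ => d0 s₀ * (polMatrix T π ^ t) s₀ st)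
        (fun s₀ _ => mul_nonneg (hd00 s₀) (polPow_nonneg hT0 π t s₀ st))
        (Finset.mem_univ s)
    calc (γ ^ t * (polMatrix T π ^ t) s st) * d0 s
        = γ ^ t * (d0 s * (polMatrix T π ^ t) s st) := by ring
    _ ≤ γ ^ t * ∑ s₀, d0 s₀ * (polMatrix T π ^ t) s₀ st :=
        mul_le_mul_of_nonneg_left this (pow_nonneg hγ0 t)
  have h2 : wser T γ π s st * d0 s ≤ ∑' t : ℕ, γ ^ t * ∑ s₀, d0 s₀ * (polMatrix T π ^ t) s₀ st := by
    rw [wser, ← tsum_mul_right]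
    exact Summable.tsum_le_tsum h1 ((wser_summable hT0 hT1 hγ0 hγ1 π s st).mul_right (d0 s))
      (dvisit_summand_summable hT0 hT1 hd00 hd01 hγ0 hγ1 π st)
  calc wser T γ π s st * ((1 - γ) * d0 s) = (1 - γ) * (wser T γ π s st * d0 s) := by ring
  _ ≤ (1 - γ) * ∑' t : ℕ, γ ^ t * ∑ s₀, d0 s₀ * (polMatrix T π ^ t) s₀ st :=
      mul_le_mul_of_nonneg_left h2 (by linarith)
  _ = dvisit T d0 γ π st := rfl

end Dv

lemma bc_ineq {x : ℝ} (hx0 : 0 ≤ x) (hx1 : x ≤ 1) {N : ℕ} (hN : 1 ≤ N) :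
    x * (1 - x) ^ N ≤ 4 / (9 * N) := by
  have hN' : (1:ℝ) ≤ N := by exact_mod_cast hN
  have hNpos : (0:ℝ) < N := by linarith
  have h1 : (1 - x) ^ N ≤ Real.exp (-((N:ℝ) * x)) := by
    have hb : 1 - x ≤ Real.exp (-x) := by
      have := Real.add_one_le_exp (-x); linarith
    calc (1 - x) ^ N ≤ Real.exp (-x) ^ N := pow_le_pow_left₀ (by linarith) hb N
    _ = Real.exp (-((N:ℝ) * x)) := by
        rw [← Real.exp_nat_mul]; congr 1; ring
  set y : ℝ := (N:ℝ) * x with hy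
  have hy0 : 0 ≤ y := mul_nonneg hNpos.le hx0
  have h2 : y * Real.exp (-y) ≤ Real.exp (-1) := by
    have hyl : y ≤ Real.exp (y - 1) := by
      have := Real.add_one_le_exp (y - 1); linarith
    calc y * Real.exp (-y) ≤ Real.exp (y - 1) * Real.exp (-y) :=
        mul_le_mul_of_nonneg_right hyl (Real.exp_pos _).le
    _ = Real.exp (-1) := by rw [← Real.exp_add]; congr 1; ring
  have h3 : Real.exp (-1) ≤ 4 / 9 := by
    rw [Real.exp_neg]
    have h : (9:ℝ)/4 ≤ Real.exp 1 := by
      have := Real.exp_one_gt_d9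
      norm_num at this ⊢
      linarith
    have hpos : (0:ℝ) < Real.exp 1 := Real.exp_pos 1
    have hinv : (Real.exp 1)⁻¹ * Real.exp 1 = 1 := inv_mul_cancel₀ hpos.ne'
    have hnn : (0:ℝ) ≤ (Real.exp 1)⁻¹ := by positivity
    nlinarith
  calc x * (1 - x) ^ N ≤ x * Real.exp (-y) := mul_le_mul_of_nonneg_left h1 hx0
  _ = (1/(N:ℝ)) * (y * Real.exp (-y)) := by
      rw [hy]; field_simp
  _ ≤ (1/(N:ℝ)) * (4/9) := by
      exact mul_le_mul_of_nonneg_left (le_trans h2 h3) (by positivity)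
  _ = 4 / (9*N) := by field_simp
/-- Let `D = (st₁,…,st_N)` consist of `N ≥ 1` i.i.d. draws from the
normalized discounted visitation distribution `d^{π^E}` of the deterministic expert
policy `π^E`.  Suppose for every dataset `D` a deterministic policy `π_D` is given with
`π_D(st) = π^E(st)` for all states `st` appearing in `D`.  Then for every state `s` with
`d₀(s) > 0`, the expected value gap satisfies
`E_D[V^{π^E}(s) − V^{π_D}(s)] ≤ (1/(d₀(s)(1−γ)²)) · (4|S|/(9N))`. -/
theorem stmt_2 {S A : Type*} [Fintype S] [Fintype A] [DecidableEq S]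
    (T : S → A → S → ℝ) (hT0 : ∀ s a s', 0 ≤ T s a s') (hT1 : ∀ s a, ∑ s', T s a s' = 1)
    (r : S → A → ℝ) (hr0 : ∀ s a, 0 ≤ r s a) (hr1 : ∀ s a, r s a ≤ 1)
    (d0 : S → ℝ) (hd00 : ∀ s, 0 ≤ d0 s) (hd01 : ∑ s, d0 s = 1)
    (γ : ℝ) (hγ0 : 0 < γ) (hγ1 : γ < 1)
    (πE : S → A) (N : ℕ) (hN : 1 ≤ N)
    (πD : (Fin N → S) → S → A)
    (hπD : ∀ D : Fin N → S, ∀ i : Fin N, πD D (D i) = πE (D i))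
    (s : S) (hs : 0 < d0 s) :
    (∑ D : Fin N → S,
        (∏ i, dvisit T d0 γ πE (D i)) * (valueFn T r γ πE s - valueFn T r γ (πD D) s))
      ≤ 1 / (d0 s * (1 - γ) ^ 2) * (4 * (Fintype.card S : ℝ) / (9 * (N : ℝ))) := by

  classical
  have hγ0' : 0 ≤ γ := hγ0.le
  have hγ1' : 0 < 1 - γ := by linarith
  set d : S → ℝ := dvisit T d0 γ πE with hd
  have hdnn : ∀ st, 0 ≤ d st := fun st => dvisit_nonneg hT0 hd00 hγ0' hγ1 πE st
  have hdsum : ∑ st, d st = 1 := dvisit_sum_one hT0 hT1 hd00 hd01 hγ0' hγ1 πE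
  have hdle1 : ∀ st, d st ≤ 1 := by
    intro st
    rw [← hdsum]
    exact Finset.single_le_sum (fun k _ => hdnn k) (Finset.mem_univ st)
  set K : ℝ := 1 / (d0 s * (1 - γ) ^ 2) with hK
  have hK0 : 0 ≤ K := by positivity
  have hrE : ∀ (ρ : S → A) (s' : S), |r s' (ρ s')| ≤ 1 := fun ρ s' =>
    abs_le.mpr ⟨by linarith [hr0 s' (ρ s')], hr1 s' (ρ s')⟩
  have hinv0 : (0:ℝ) ≤ (1 - γ)⁻¹ := by positivity
  have step1 : ∀ D : Fin N → S,
      valueFn T r γ πE s - valueFn T r γ (πD D) s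
        ≤ K * ∑ s', (if πD D s' = πE s' then (0:ℝ) else 1) * d s' := by
    intro D
    set π : S → A := πD D with hπ
    have hVnn : ∀ k, 0 ≤ pser T γ π (fun u => r u (π u)) k := fun k =>
      pser_nonneg hT0 hγ0' π (fun u => hr0 u (π u)) k
    have hVb : ∀ k, |pser T γ π (fun u => r u (π u)) k| ≤ (1 - γ)⁻¹ := by
      intro k
      refine abs_le.mpr ⟨by linarith [hVnn k], ?_⟩
      simpa using pser_le hT0 hT1 hγ0' hγ1 π (hrE π) k
    set g : S → ℝ := fun s' => r s' (πE s')
        + γ * ∑ k, polMatrix T πE s' k * pser T γ π (fun u => r u (π u)) k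
        - pser T γ π (fun u => r u (π u)) s' with hg
    set h : S → ℝ := fun s' => (1 - γ)⁻¹ * (if π s' = πE s' then (0:ℝ) else 1) with hh
    have hgb : ∀ s', |g s'| ≤ 1 + γ * (1 - γ)⁻¹ + (1 - γ)⁻¹ := by
      intro s'
      have h1 : |γ * ∑ k, polMatrix T πE s' k * pser T γ π (fun u => r u (π u)) k|
          ≤ γ * (1 - γ)⁻¹ := by
        rw [abs_mul, abs_of_nonneg hγ0']
        refine mul_le_mul_of_nonneg_left ?_ hγ0'
        have := polPow_apply_abs_le hT0 hT1 πE
          (c := fun k => pser T γ π (fun u => r u (π u)) k) hVb 1 s'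
        simpa [pow_one] using this
      calc |g s'| ≤ |r s' (πE s')
            + γ * ∑ k, polMatrix T πE s' k * pser T γ π (fun u => r u (π u)) k|
            + |pser T γ π (fun u => r u (π u)) s'| := abs_sub _ _
      _ ≤ (|r s' (πE s')|
            + |γ * ∑ k, polMatrix T πE s' k * pser T γ π (fun u => r u (π u)) k|)
            + |pser T γ π (fun u => r u (π u)) s'| := by gcongr; exact abs_add_le _ _
      _ ≤ 1 + γ * (1 - γ)⁻¹ + (1 - γ)⁻¹ := by
          have := hrE πE s'
          have := hVb s'
          linarith
    have hhb : ∀ s', |h s'| ≤ (1 - γ)⁻¹ := by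
      intro s'
      have hcb : |(if π s' = πE s' then (0:ℝ) else 1)| ≤ 1 := by split_ifs <;> simp
      calc |h s'| = (1 - γ)⁻¹ * |(if π s' = πE s' then (0:ℝ) else 1)| := by
            rw [hh, abs_mul, abs_of_nonneg hinv0]
      _ ≤ (1 - γ)⁻¹ * 1 := mul_le_mul_of_nonneg_left hcb hinv0
      _ = (1 - γ)⁻¹ := mul_one _
    have hhnn : ∀ s', 0 ≤ h s' := by
      intro s'
      rw [hh]
      refine mul_nonneg hinv0 ?_
      split_ifs <;> norm_num
    have hgh : ∀ s', g s' ≤ h s' := by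
      intro s'
      by_cases hcase : π s' = πE s'
      · have hbell : pser T γ π (fun u => r u (π u)) s'
            = r s' (π s') + γ * ∑ k, polMatrix T π s' k * pser T γ π (fun u => r u (π u)) k :=
          pser_bellman hT0 hT1 hγ0' hγ1 π (hrE π) s'
        have hrow : ∑ k, polMatrix T πE s' k * pser T γ π (fun u => r u (π u)) k
            = ∑ k, polMatrix T π s' k * pser T γ π (fun u => r u (π u)) k := by
          refine Finset.sum_congr rfl fun k _ => ?_
          simp [polMatrix, hcase]
        have hg0 : g s' = 0 := by
          rw [hg]
          simp only
          rw [hrow, ← hcase, hbell]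
          ring
        rw [hg0, hh]
        simp only
        rw [if_pos hcase, mul_zero]
      · rw [hh]
        simp only
        rw [if_neg hcase, mul_one]
        have h1 : γ * ∑ k, polMatrix T πE s' k * pser T γ π (fun u => r u (π u)) k
            ≤ γ * (1 - γ)⁻¹ := by
          refine mul_le_mul_of_nonneg_left ?_ hγ0'
          have := polPow_apply_abs_le hT0 hT1 πE
            (c := fun k => pser T γ π (fun u => r u (π u)) k) hVb 1 s'
          rw [pow_one] at this
          exact le_trans (le_abs_self _) this
        have h2 : 0 ≤ pser T γ π (fun u => r u (π u)) s' := hVnn s'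
        have h3 : r s' (πE s') ≤ 1 := hr1 s' (πE s')
        have heq : 1 + γ * (1 - γ)⁻¹ = (1 - γ)⁻¹ := by field_simp; ring
        rw [hg]
        simp only
        linarith
    have hdiff : valueFn T r γ πE s - valueFn T r γ π s = pser T γ πE g s :=
      perf_diff hT0 hT1 hγ0' hγ1 r hr0 hr1 πE π s
    have hmono : pser T γ πE g s ≤ pser T γ πE h s :=
      pser_mono hT0 hT1 hγ0' hγ1 πE hgb hhb hgh s
    have heqw : pser T γ πE h s = ∑ s', h s' * wser T γ πE s s' :=
      pser_eq_sum_wser hT0 hT1 hγ0' hγ1 πE h s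
    have hsum : ∑ s', h s' * wser T γ πE s s'
        ≤ ∑ s', h s' * (d s' / ((1 - γ) * d0 s)) := by
      refine Finset.sum_le_sum fun s' _ => ?_
      exact mul_le_mul_of_nonneg_left
        (wser_le_dvisit hT0 hT1 hd00 hd01 hγ0' hγ1 πE hs s') (hhnn s')
    have hfin : ∑ s', h s' * (d s' / ((1 - γ) * d0 s))
        = K * ∑ s', (if π s' = πE s' then (0:ℝ) else 1) * d s' := by
      rw [Finset.mul_sum]
      refine Finset.sum_congr rfl fun s' _ => ?_
      rw [hh, hK]
      simp only
      field_simp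
    calc valueFn T r γ πE s - valueFn T r γ π s = pser T γ πE g s := hdiff
    _ ≤ pser T γ πE h s := hmono
    _ = ∑ s', h s' * wser T γ πE s s' := heqw
    _ ≤ ∑ s', h s' * (d s' / ((1 - γ) * d0 s)) := hsum
    _ = K * ∑ s', (if π s' = πE s' then (0:ℝ) else 1) * d s' := hfin
  have wnn : ∀ D : Fin N → S, 0 ≤ ∏ i, d (D i) := fun D =>
    Finset.prod_nonneg fun i _ => hdnn _
  calc ∑ D : Fin N → S, (∏ i, d (D i)) * (valueFn T r γ πE s - valueFn T r γ (πD D) s)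
      ≤ ∑ D : Fin N → S, (∏ i, d (D i))
          * (K * ∑ s', (if πD D s' = πE s' then (0:ℝ) else 1) * d s') :=
        Finset.sum_le_sum fun D _ => mul_le_mul_of_nonneg_left (step1 D) (wnn D)
  _ = K * ∑ s', ∑ D : Fin N → S,
        (∏ i, d (D i)) * ((if πD D s' = πE s' then (0:ℝ) else 1) * d s') := by
      have h1 : ∀ D : Fin N → S,
          (∏ i, d (D i)) * (K * ∑ s', (if πD D s' = πE s' then (0:ℝ) else 1) * d s')
            = ∑ s', K * ((∏ i, d (D i)) * ((if πD D s' = πE s' then (0:ℝ) else 1) * d s')) := by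
        intro D
        simp only [← Finset.mul_sum]
        ring
      rw [Finset.sum_congr rfl fun D _ => h1 D, Finset.sum_comm]
      simp only [← Finset.mul_sum]
  _ ≤ K * ∑ s', d s' * (1 - d s') ^ N := by
      refine mul_le_mul_of_nonneg_left (Finset.sum_le_sum fun s' _ => ?_) hK0
      have hstep : ∀ D : Fin N → S,
          (∏ i, d (D i)) * ((if πD D s' = πE s' then (0:ℝ) else 1) * d s')
            ≤ (∏ i, (if D i = s' then (0:ℝ) else d (D i))) * d s' := by
        intro D
        have hpnn : 0 ≤ ∏ i, (if D i = s' then (0:ℝ) else d (D i)) := by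
          refine Finset.prod_nonneg fun i _ => ?_
          split_ifs
          · exact le_rfl
          · exact hdnn _
        by_cases hex : ∃ i, D i = s'
        · obtain ⟨i, hi⟩ := hex
          have hagree : πD D s' = πE s' := by rw [← hi]; exact hπD D i
          rw [if_pos hagree, zero_mul, mul_zero]
          exact mul_nonneg hpnn (hdnn s')
        · push_neg at hex
          have hprod : ∏ i, (if D i = s' then (0:ℝ) else d (D i)) = ∏ i, d (D i) :=
            Finset.prod_congr rfl fun i _ => if_neg (hex i)
          rw [hprod]
          split_ifs with hcase
          · rw [zero_mul, mul_zero]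
            exact mul_nonneg (wnn D) (hdnn s')
          · rw [one_mul]
      calc ∑ D : Fin N → S,
            (∏ i, d (D i)) * ((if πD D s' = πE s' then (0:ℝ) else 1) * d s')
          ≤ ∑ D : Fin N → S, (∏ i, (if D i = s' then (0:ℝ) else d (D i))) * d s' :=
            Finset.sum_le_sum fun D _ => hstep D
      _ = (∑ x, if x = s' then (0:ℝ) else d x) ^ N * d s' := by
            rw [← Finset.sum_mul]
            congr 1
            exact ((Fintype.sum_pow (fun x => if x = s' then (0:ℝ) else d x) N).symm :)
      _ = (1 - d s') ^ N * d s' := by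
            have hsx : ∑ x, (if x = s' then (0:ℝ) else d x) = 1 - d s' := by
              have h1 : ∀ x : S, (if x = s' then (0:ℝ) else d x)
                  = d x - (if x = s' then d x else 0) := by
                intro x; split_ifs <;> ring
              simp only [h1]
              rw [Finset.sum_sub_distrib, hdsum, Finset.sum_ite_eq' Finset.univ s' d]
              simp
            rw [hsx]
      _ = d s' * (1 - d s') ^ N := mul_comm _ _
  _ ≤ K * ∑ _s' : S, 4 / (9 * (N:ℝ)) := by
      refine mul_le_mul_of_nonneg_left (Finset.sum_le_sum fun s' _ => ?_) hK0
      exact bc_ineq (hdnn s') (hdle1 s') hN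
  _ = 1 / (d0 s * (1 - γ) ^ 2) * (4 * (Fintype.card S : ℝ) / (9 * (N : ℝ))) := by
      rw [Finset.sum_const, Finset.card_univ, nsmul_eq_mul, hK]
      ring
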